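/- Let n ≥ 2, let r : ZMod n → [0,∞) satisfy L := 1 − 2∑_i r_i > 0, and let v⁰ : ZMod n → ℝ satisfy min_i v⁰_i > L/n. Then for every family of Borel probability measures P_1, …, P_n on ℝ with P_i({x : x ≥ v⁰_i}) = 1 for all i, the parallel-update gap kernel κ on X_L admits infinitely many pairwise distinct invariant probability measures. -/

import Mathlib

open MeasureTheory

/-- The parallel gap update map: `F_v(Δ)_i = Δ_i - min (v_i) (Δ_i) + min (v_{i+1}) (Δ_{i+1})`,
indices mod `n`. -/
noncomputable def parGapUpdate (n : ℕ) (v Δ : ZMod n → ℝ) : ZMod n → ℝ :=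
  fun i => Δ i - min (v i) (Δ i) + min (v (i + 1)) (Δ (i + 1))

open scoped ENNReal

/-- rotation of a configuration by `k`. -/
noncomputable def rotc (n : ℕ) (k : ZMod n) (Δ : ZMod n → ℝ) : ZMod n → ℝ :=
  fun i => Δ (i + k)

/-- the bump configuration. -/
noncomputable def bump (n : ℕ) (c t : ℝ) : ZMod n → ℝ :=
  fun i => if i = 0 then c + t else if i = 1 then c - t else c

/-- uniform measure on the rotation orbit of the bump configuration. -/
noncomputable def orbMeas (n : ℕ) [NeZero n] (c t : ℝ) : Measure (ZMod n → ℝ) :=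
  (n : ℝ≥0∞)⁻¹ • ∑ k : ZMod n, Measure.dirac (rotc n k (bump n c t))

lemma bump_sum (n : ℕ) [NeZero n] (hn : 2 ≤ n) (c t : ℝ) :
    ∑ i : ZMod n, bump n c t i = n * c := by
  haveI : Fact (1 < n) := ⟨hn⟩
  have : ∀ i : ZMod n, bump n c t i
      = c + (if i = 0 then t else 0) - (if i = 1 then t else 0) := by
    intro i
    simp only [bump]
    split_ifs with h1 h2 <;> simp_all
  simp only [this]
  rw [Finset.sum_sub_distrib, Finset.sum_add_distrib]
  simp [Finset.sum_ite_eq', mul_comm]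

lemma rotc_sum (n : ℕ) [NeZero n] (k : ZMod n) (Δ : ZMod n → ℝ) :
    ∑ i : ZMod n, rotc n k Δ i = ∑ i : ZMod n, Δ i :=
  Fintype.sum_equiv (Equiv.addRight k) _ _ (fun _ => rfl)

lemma bump_le (n : ℕ) (c t : ℝ) (ht : 0 ≤ t) (i : ZMod n) : bump n c t i ≤ c + t := by
  simp only [bump]; split_ifs <;> linarith

lemma bump_nonneg (n : ℕ) (c t : ℝ) (ht : 0 ≤ t) (htc : t ≤ c) (i : ZMod n) :
    0 ≤ bump n c t i := by
  simp only [bump]; split_ifs <;> linarith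

/-- For blocked configurations the update is a rotation. -/
lemma parGapUpdate_rotc (n : ℕ) [NeZero n] (c t : ℝ) (ht : 0 ≤ t) (k : ZMod n)
    (v : ZMod n → ℝ) (hv : ∀ i, c + t ≤ v i) :
    parGapUpdate n v (rotc n k (bump n c t)) = rotc n (k + 1) (bump n c t) := by
  funext i
  have hle : ∀ j : ZMod n, rotc n k (bump n c t) j ≤ v j := fun j =>
    le_trans (bump_le n c t ht (j + k)) (hv j)
  show rotc n k (bump n c t) i - min (v i) (rotc n k (bump n c t) i)
      + min (v (i + 1)) (rotc n k (bump n c t) (i + 1)) = rotc n (k + 1) (bump n c t) i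
  rw [min_eq_right (hle i), min_eq_right (hle (i + 1))]
  show bump n c t (i + k) - bump n c t (i + k) + bump n c t (i + 1 + k)
      = bump n c t (i + (k + 1))
  rw [show i + 1 + k = i + (k + 1) from by ring]
  ring

/-- **Proposition 1 of the paper** (with `∑ v⁰_i > L` strengthened to
`min_i v⁰_i > L/n`): failure of unique ergodicity of the parallel-update gap
kernel due to excessively large local jumps.  The set of invariant probability
measures of the kernel `κ(Δ) = (⊗_i P_i).map (v ↦ F_v Δ)` on
`X_L = {Δ | ∀ i, 0 ≤ Δ i, ∑ i, Δ i = L}` is infinite. -/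
theorem par_gap_kernel_infinitely_many_invariant_measures_of_large_jumps
    (n : ℕ) [NeZero n] (hn : 2 ≤ n)
    (r : ZMod n → ℝ) (hr : ∀ i, 0 ≤ r i)
    (L : ℝ) (hLdef : L = 1 - 2 * ∑ i : ZMod n, r i) (hL : 0 < L)
    (v0 : ZMod n → ℝ) (hv0 : ∀ i, L / n < v0 i)
    (P : ZMod n → Measure ℝ) [∀ i, IsProbabilityMeasure (P i)]
    (hP : ∀ i, P i (Set.Ici (v0 i)) = 1) :
    {μ : Measure (ZMod n → ℝ) |
      IsProbabilityMeasure μ ∧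
      μ {Δ | (∀ i, 0 ≤ Δ i) ∧ ∑ i : ZMod n, Δ i = L} = 1 ∧
      ∀ A : Set (ZMod n → ℝ), MeasurableSet A →
        ∫⁻ Δ, Measure.pi P ((fun v => parGapUpdate n v Δ) ⁻¹' A) ∂μ = μ A}.Infinite := by
  classical
  haveI : Fact (1 < n) := ⟨hn⟩
  have hnR : (0 : ℝ) < n := by positivity
  have hnE0 : (n : ℝ≥0∞) ≠ 0 := by exact_mod_cast (NeZero.ne n)
  have hnET : (n : ℝ≥0∞) ≠ ⊤ := ENNReal.natCast_ne_top n
  set c : ℝ := L / n with hc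
  have hc0 : 0 < c := div_pos hL hnR
  -- minimum of v0
  obtain ⟨i0, -, hmin⟩ := Finset.exists_min_image Finset.univ v0 ⟨0, Finset.mem_univ 0⟩
  set m : ℝ := v0 i0 with hm
  have hcm : c < m := hv0 i0
  have hmle : ∀ i, m ≤ v0 i := fun i => hmin i (Finset.mem_univ i)
  set ε : ℝ := min (m - c) c with hε
  have hε0 : 0 < ε := lt_min (by linarith) hc0
  -- the product measure gives full mass to {v | ∀ i, v0 i ≤ v i}
  have hpiS : Measure.pi P (Set.univ.pi fun i => Set.Ici (v0 i)) = 1 := by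
    rw [Measure.pi_pi]; simp [hP]
  have hSc : Measure.pi P (Set.univ.pi fun i => Set.Ici (v0 i))ᶜ = 0 := by
    rw [measure_compl (MeasurableSet.univ_pi fun i => measurableSet_Ici)
      (measure_ne_top _ _), hpiS]
    simp
  have hae : ∀ᵐ v ∂Measure.pi P, ∀ i, v0 i ≤ v i := by
    rw [ae_iff]
    refine measure_mono_null (fun v hv => ?_) hSc
    simp only [Set.mem_setOf_eq, not_forall] at hv
    simp only [Set.mem_compl_iff, Set.mem_pi, Set.mem_univ, Set.mem_Ici, true_implies]
    push_neg
    obtain ⟨i, hi⟩ := hv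
    exact ⟨i, by linarith⟩
  -- key facts about orbMeas for t ∈ Ioo 0 ε
  have key : ∀ t ∈ Set.Ioo (0:ℝ) ε, orbMeas n c t ∈
      {μ : Measure (ZMod n → ℝ) |
      IsProbabilityMeasure μ ∧
      μ {Δ | (∀ i, 0 ≤ Δ i) ∧ ∑ i : ZMod n, Δ i = L} = 1 ∧
      ∀ A : Set (ZMod n → ℝ), MeasurableSet A →
        ∫⁻ Δ, Measure.pi P ((fun v => parGapUpdate n v Δ) ⁻¹' A) ∂μ = μ A} := by
    rintro t ⟨ht0, htε⟩
    have htc : t ≤ c := le_of_lt (lt_of_lt_of_le htε (min_le_right _ _))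
    have htm : c + t < m := by
      have := lt_of_lt_of_le htε (min_le_left _ _); linarith
    -- each orbit point is in X_L
    have hXL : ∀ k : ZMod n, rotc n k (bump n c t) ∈
        {Δ : ZMod n → ℝ | (∀ i, 0 ≤ Δ i) ∧ ∑ i : ZMod n, Δ i = L} := by
      intro k
      constructor
      · intro i; exact bump_nonneg n c t ht0.le htc (i + k)
      · rw [rotc_sum, bump_sum n hn, hc]
        field_simp
    have hmass : ∀ s : Set (ZMod n → ℝ),
        (∀ k : ZMod n, rotc n k (bump n c t) ∈ s) → orbMeas n c t s = 1 := by
      intro s hs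
      simp only [orbMeas, Measure.smul_apply, Measure.coe_finset_sum,
        Finset.sum_apply, smul_eq_mul]
      rw [Finset.sum_congr rfl (fun k _ => Measure.dirac_apply_of_mem (hs k)),
        Finset.sum_const, Finset.card_univ, ZMod.card, nsmul_eq_mul, mul_one,
        ENNReal.inv_mul_cancel hnE0 hnET]
    refine ⟨⟨hmass Set.univ fun _ => trivial⟩, hmass _ hXL, ?_⟩
    intro A hA
    -- compute the integral
    rw [orbMeas, lintegral_smul_measure, lintegral_finset_sum_measure]
    simp only [lintegral_dirac]
    have hterm : ∀ k : ZMod n,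
        Measure.pi P ((fun v => parGapUpdate n v (rotc n k (bump n c t))) ⁻¹' A)
          = A.indicator (1 : (ZMod n → ℝ) → ℝ≥0∞) (rotc n (k + 1) (bump n c t)) := by
      intro k
      have heq : ((fun v => parGapUpdate n v (rotc n k (bump n c t))) ⁻¹' A)
          =ᵐ[Measure.pi P]
          (if rotc n (k + 1) (bump n c t) ∈ A then Set.univ else (∅ : Set (ZMod n → ℝ))) := by
        apply Filter.eventuallyEq_set.mpr
        filter_upwards [hae] with v hv
        have hv' : ∀ i, c + t ≤ v i := fun i => le_trans (le_of_lt (lt_of_lt_of_le htm (hmle i))) (hv i)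
        simp only [Set.mem_preimage]
        rw [parGapUpdate_rotc n c t ht0.le k v hv']
        by_cases hmem : rotc n (k + 1) (bump n c t) ∈ A <;> simp [hmem]
      rw [measure_congr heq]
      by_cases hmem : rotc n (k + 1) (bump n c t) ∈ A <;> simp [hmem]
    rw [Finset.sum_congr rfl fun k _ => hterm k]
    -- reindex the sum
    have hre : ∑ k : ZMod n, A.indicator (1 : (ZMod n → ℝ) → ℝ≥0∞) (rotc n (k + 1) (bump n c t))
        = ∑ k : ZMod n, A.indicator (1 : (ZMod n → ℝ) → ℝ≥0∞) (rotc n k (bump n c t)) :=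
      Fintype.sum_equiv (Equiv.addRight 1) _ _ (fun _ => rfl)
    rw [hre]
    simp only [orbMeas, Measure.smul_apply, Measure.coe_finset_sum,
      Finset.sum_apply, smul_eq_mul]
    congr 1
    exact Finset.sum_congr rfl fun k _ => (Measure.dirac_apply' _ hA).symm
  -- injectivity
  have hinj : Set.InjOn (fun t => orbMeas n c t) (Set.Ioo (0:ℝ) ε) := by
    rintro t ⟨ht0, -⟩ s ⟨hs0, -⟩ hts
    by_contra hne
    have h1 : orbMeas n c t {bump n c t} ≠ 0 := by
      simp only [orbMeas, Measure.smul_apply, Measure.coe_finset_sum,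
        Finset.sum_apply, smul_eq_mul]
      have hge : Measure.dirac (rotc n 0 (bump n c t)) {bump n c t} = 1 := by
        refine Measure.dirac_apply_of_mem ?_
        simp only [Set.mem_singleton_iff]
        funext i; simp [rotc]
      have hle : (1:ℝ≥0∞) ≤ ∑ k : ZMod n, Measure.dirac (rotc n k (bump n c t)) {bump n c t} := by
        rw [← hge]
        exact Finset.single_le_sum
          (f := fun k : ZMod n => Measure.dirac (rotc n k (bump n c t)) {bump n c t})
          (fun _ _ => zero_le) (Finset.mem_univ 0)
      intro h0
      rw [mul_eq_zero] at h0
      rcases h0 with h0 | h0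
      · exact (ENNReal.inv_ne_zero.mpr hnET) h0
      · rw [h0] at hle; exact (not_le.mpr zero_lt_one) hle
    have h2 : orbMeas n c s {bump n c t} = 0 := by
      simp only [orbMeas, Measure.smul_apply, Measure.coe_finset_sum,
        Finset.sum_apply, smul_eq_mul]
      have : ∀ k : ZMod n, Measure.dirac (rotc n k (bump n c s)) {bump n c t} = 0 := by
        intro k
        rw [Measure.dirac_apply' _ (measurableSet_singleton _)]
        refine Set.indicator_of_notMem ?_ _
        simp only [Set.mem_singleton_iff]
        intro hEq
        have := congrFun hEq (-k)
        simp only [rotc, neg_add_cancel] at this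
        -- rotc n k (bump n c s) (-k) = bump n c s 0 = c + s
        simp only [bump, if_pos rfl] at this
        have hne' : t ≠ s := hne
        split_ifs at this <;> first | exact hne' (by linarith) | linarith
      simp [this]
    simp only at hts
    rw [hts] at h1
    exact h1 h2
  -- conclude
  have himg : ((fun t => orbMeas n c t) '' (Set.Ioo 0 ε)).Infinite :=
    Set.Infinite.image hinj (Set.Ioo_infinite hε0)
  refine Set.Infinite.mono ?_ himg
  rintro μ ⟨t, ht, rfl⟩
  exact key t ht
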